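/- Let u : P₂(ℝ^d) → ℝ be L-differentiable with L-derivative ∂_μ u(μ,·) : ℝ^d → ℝ^d jointly continuous. For N > 1 define the empirical projection u^N : (ℝ^d)^N → ℝ by u^N(x¹,...,x^N) = u((1/N)∑_{l=1}^N δ_{x^l}). Then u^N is differentiable on (ℝ^d)^N and ∂_{x^j} u^N(x¹,...,x^N) = (1/N) ∂_μ u((1/N)∑_l δ_{x^l}, x^j) for every j. -/

import Mathlib

open MeasureTheory Set Filter
open scoped ENNReal BigOperators RealInnerProductSpace

noncomputable def empMeas {d N : ℕ} (x : Fin N → EuclideanSpace ℝ (Fin d)) :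
    Measure (EuclideanSpace ℝ (Fin d)) :=
  (N : ℝ≥0∞)⁻¹ • ∑ i : Fin N, Measure.dirac (x i)

private lemma toLp_congr' {α E : Type*} [MeasurableSpace α] {μ : Measure α}
    [NormedAddCommGroup E] {p : ℝ≥0∞} {f g : α → E} (hf : MemLp f p μ) (hg : MemLp g p μ)
    (h : f = g) : hf.toLp f = hg.toLp g := by subst h; rfl

/-- if `u : P₂(ℝ^d) → ℝ` is L-differentiable, i.e. its lift
`X ↦ u(Law(X))` to `L²(Ω;ℝ^d)` is Fréchet differentiable with derivative represented by
`∂_μ u(Law(X), X(·))`, then for `N > 1` the empirical projection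
`u^N(x¹,…,x^N) = u((1/N)∑ δ_{x^l})` is differentiable and
`∂_{x^j} u^N(x) = (1/N) ∂_μ u(μ̄^N(x), x^j)`. -/
theorem empirical_projection_lions_derivative {d N : ℕ} (hN : 1 < N)
    (Ω : Type) [MeasureSpace Ω] [IsProbabilityMeasure (volume : Measure Ω)]
    (u : Measure (EuclideanSpace ℝ (Fin d)) → ℝ)
    (Du : Measure (EuclideanSpace ℝ (Fin d)) → EuclideanSpace ℝ (Fin d) →
      EuclideanSpace ℝ (Fin d))
    (hDucont : ∀ μ, Continuous (Du μ))
    -- the underlying probability space is rich enough: any law with finite second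
    -- moment is realized by some square-integrable random variable
    (hrich : ∀ μ : Measure (EuclideanSpace ℝ (Fin d)), IsProbabilityMeasure μ →
      (∫⁻ x, ‖x‖₊ ^ 2 ∂μ) < ⊤ →
        ∃ X : Lp (EuclideanSpace ℝ (Fin d)) 2 (volume : Measure Ω),
          Measure.map (X : Ω → EuclideanSpace ℝ (Fin d)) volume = μ)
    -- L-differentiability: the lift is Fréchet differentiable at every `X`, with
    -- derivative represented by `∂_μ u (Law X, X ·) = Du (Law X) (X ·)`
    (hL : ∀ X : Lp (EuclideanSpace ℝ (Fin d)) 2 (volume : Measure Ω),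
      ∃ D' : Lp (EuclideanSpace ℝ (Fin d)) 2 (volume : Measure Ω) →L[ℝ] ℝ,
        HasFDerivAt
          (fun Y : Lp (EuclideanSpace ℝ (Fin d)) 2 (volume : Measure Ω) =>
            u (Measure.map (Y : Ω → EuclideanSpace ℝ (Fin d)) volume)) D' X ∧
        ∀ Y : Lp (EuclideanSpace ℝ (Fin d)) 2 (volume : Measure Ω),
          D' Y = ∫ ω, ⟪Du (Measure.map (X : Ω → EuclideanSpace ℝ (Fin d)) volume) (X ω),
            Y ω⟫ ∂volume) :
    Differentiable ℝ (fun x : Fin N → EuclideanSpace ℝ (Fin d) => u (empMeas x)) ∧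
    ∀ (x : Fin N → EuclideanSpace ℝ (Fin d)) (j : Fin N) (v : EuclideanSpace ℝ (Fin d)),
      fderiv ℝ (fun x : Fin N → EuclideanSpace ℝ (Fin d) => u (empMeas x)) x
          (Pi.single j v) = ⟪(1 / N : ℝ) • Du (empMeas x) (x j), v⟫ := by
  classical
  set E := EuclideanSpace ℝ (Fin d) with hE
  have hN0 : (N : ℝ≥0∞) ≠ 0 := by
    simp only [ne_eq, Nat.cast_eq_zero]
    omega
  have hNtop : (N : ℝ≥0∞) ≠ ⊤ := ENNReal.natCast_ne_top N
  rcases Nat.eq_zero_or_pos d with hd | hd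
  · -- degenerate case: `E` is a single point
    subst hd
    have hfun : (fun x : Fin N → E => u (empMeas x)) =
        fun _ => u (empMeas (fun _ : Fin N => (0 : E))) := by
      funext x
      congr 1
      congr 1
      funext i
      exact Subsingleton.elim _ _
    constructor
    · rw [hfun]; exact differentiable_const _
    · intro x j v
      rw [hfun, fderiv_fun_const]
      have hv : v = 0 := Subsingleton.elim _ _
      simp [hv]
  · -- main case: `d ≥ 1`
    -- choose `N` distinct points in `E`
    set p : Fin N → E := fun i => EuclideanSpace.single ⟨0, hd⟩ (i : ℝ) with hp
    have hpinj : Function.Injective p := by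
      intro i k h
      have h0 := congrArg (fun w : E => w ⟨0, hd⟩) h
      simp [hp, EuclideanSpace.single_apply] at h0
      exact_mod_cast Fin.ext (by exact_mod_cast h0)
    have hprob : IsProbabilityMeasure (empMeas p) := by
      constructor
      simp only [empMeas, Measure.smul_apply, Measure.finset_sum_apply, smul_eq_mul,
        Measure.dirac_apply_of_mem (mem_univ _), Finset.sum_const, Finset.card_univ,
        Fintype.card_fin, nsmul_eq_mul, mul_one]
      exact ENNReal.inv_mul_cancel hN0 hNtop
    have hmom : (∫⁻ x, ‖x‖₊ ^ 2 ∂(empMeas p)) < ⊤ := by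
      rw [empMeas, lintegral_smul_measure, lintegral_finset_sum_measure]
      simp only [lintegral_dirac]
      refine ENNReal.mul_lt_top ?_ ?_
      · exact ENNReal.inv_lt_top.mpr (pos_iff_ne_zero.mpr hN0)
      · exact ENNReal.sum_lt_top.mpr fun i _ => ENNReal.pow_lt_top ENNReal.coe_lt_top
    obtain ⟨Z, hZ⟩ := hrich (empMeas p) hprob hmom
    set Z0 : Ω → E := (Z : Ω → E) with hZ0
    have hZ0m : Measurable Z0 := (Lp.stronglyMeasurable Z).measurable
    set A : Fin N → Set Ω := fun i => Z0 ⁻¹' {p i} with hA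
    have hAmeas : ∀ i, MeasurableSet (A i) := fun i => hZ0m (measurableSet_singleton _)
    have hdiracp : ∀ i k : Fin N, Measure.dirac (p k) {p i} = if k = i then 1 else 0 := by
      intro i k
      by_cases h : k = i
      · simp [h, Measure.dirac_apply_of_mem (mem_singleton _)]
      · rw [Measure.dirac_apply' _ (measurableSet_singleton _)]
        simp only [if_neg h]
        rw [Set.indicator_of_notMem]
        simp only [mem_singleton_iff]
        exact fun hc => h (hpinj hc)
    have hvolA : ∀ i, volume (A i) = (N : ℝ≥0∞)⁻¹ := by
      intro i
      have : volume (A i) = (empMeas p) {p i} := by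
        rw [← hZ, Measure.map_apply hZ0m (measurableSet_singleton _)]
      rw [this, empMeas, Measure.smul_apply, Measure.finset_sum_apply]
      simp only [hdiracp i, Finset.sum_ite_eq' Finset.univ i, Finset.mem_univ, if_true,
        smul_eq_mul, mul_one]
    have hAdisj : Pairwise (Function.onFun Disjoint A) := by
      intro i k hik
      refine Set.disjoint_left.mpr fun ω h1 h2 => hik (hpinj ?_)
      rw [← h1, ← h2]
    have hBmeas : MeasurableSet (⋃ i, A i) := MeasurableSet.iUnion hAmeas
    have hBnull : volume (⋃ i, A i)ᶜ = 0 := by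
      have hB : volume (⋃ i, A i) = 1 := by
        have : (⋃ i, A i) = Z0 ⁻¹' (⋃ i, {p i}) := by
          simp only [hA]; exact preimage_iUnion.symm
        rw [this, ← Measure.map_apply hZ0m (MeasurableSet.iUnion fun i =>
          measurableSet_singleton _), hZ, empMeas, Measure.smul_apply,
          Measure.finset_sum_apply]
        have : ∀ k : Fin N, Measure.dirac (p k) (⋃ i : Fin N, {p i}) = 1 := fun k =>
          Measure.dirac_apply_of_mem (mem_iUnion.mpr ⟨k, mem_singleton _⟩)
        simp only [this, Finset.sum_const, Finset.card_univ, Fintype.card_fin,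
          nsmul_eq_mul, mul_one, smul_eq_mul]
        exact ENNReal.inv_mul_cancel hN0 hNtop
      rw [measure_compl hBmeas (measure_ne_top _ _), hB, measure_univ, tsub_self]
    -- the lifting map
    set g : (Fin N → E) → Ω → E := fun y ω => ∑ i : Fin N, (A i).indicator (fun _ => y i) ω
      with hg
    have hgmeas : ∀ y, Measurable (g y) := fun y =>
      Finset.measurable_sum _ fun i _ => measurable_const.indicator (hAmeas i)
    have hgmem : ∀ y, MemLp (g y) 2 volume := fun y =>
      memLp_finset_sum _ fun i _ => memLp_indicator_const 2 (hAmeas i) (y i)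
        (Or.inr (by rw [hvolA i]; exact ENNReal.inv_ne_top.mpr hN0))
    have hgA : ∀ (y : Fin N → E) (i : Fin N) (ω : Ω), ω ∈ A i → g y ω = y i := by
      intro y i ω hω
      show ∑ k : Fin N, (A k).indicator (fun _ => y k) ω = y i
      rw [Finset.sum_eq_single i]
      · exact Set.indicator_of_mem hω _
      · intro k _ hk
        refine Set.indicator_of_notMem (fun hωk => ?_) _
        exact hk (hpinj (by rw [← hωk, ← hω]))
      · exact fun h => absurd (Finset.mem_univ i) h
    have hgadd : ∀ y z : Fin N → E, g (y + z) = g y + g z := by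
      intro y z
      funext ω
      show ∑ i : Fin N, (A i).indicator (fun _ => (y + z) i) ω
        = (∑ i : Fin N, (A i).indicator (fun _ => y i) ω)
          + ∑ i : Fin N, (A i).indicator (fun _ => z i) ω
      rw [← Finset.sum_add_distrib]
      refine Finset.sum_congr rfl fun i _ => ?_
      by_cases hω : ω ∈ A i
      · simp [Set.indicator_of_mem hω]
      · simp [Set.indicator_of_notMem hω]
    have hgsmul : ∀ (c : ℝ) (y : Fin N → E), g (c • y) = c • g y := by
      intro c y
      funext ω
      show ∑ i : Fin N, (A i).indicator (fun _ => (c • y) i) ω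
        = c • ∑ i : Fin N, (A i).indicator (fun _ => y i) ω
      rw [Finset.smul_sum]
      refine Finset.sum_congr rfl fun i _ => ?_
      by_cases hω : ω ∈ A i
      · simp [Set.indicator_of_mem hω]
      · simp [Set.indicator_of_notMem hω]
    set Tlin : (Fin N → E) →ₗ[ℝ] Lp E 2 (volume : Measure Ω) :=
      { toFun := fun y => (hgmem y).toLp (g y)
        map_add' := fun y z => by
          show (hgmem (y + z)).toLp (g (y + z))
            = (hgmem y).toLp (g y) + (hgmem z).toLp (g z)
          rw [toLp_congr' (hgmem (y + z)) ((hgmem y).add (hgmem z)) (hgadd y z)]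
          exact MemLp.toLp_add _ _
        map_smul' := fun c y => by
          show (hgmem (c • y)).toLp (g (c • y)) = c • (hgmem y).toLp (g y)
          rw [toLp_congr' (hgmem (c • y)) ((hgmem y).const_smul c) (hgsmul c y)]
          exact MemLp.toLp_const_smul c _ } with hTlin
    set T : (Fin N → E) →L[ℝ] Lp E 2 (volume : Measure Ω) :=
      LinearMap.toContinuousLinearMap Tlin with hT
    have hTapp : ∀ y, T y = (hgmem y).toLp (g y) := fun y => rfl
    have hTcoe : ∀ y, ⇑(T y) =ᵐ[volume] g y := fun y => by
      rw [hTapp y]; exact MemLp.coeFn_toLp (hgmem y)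
    have hTlaw : ∀ y, Measure.map ((T y : Lp E 2 (volume : Measure Ω)) : Ω → E) volume
        = empMeas y := by
      intro y
      rw [Measure.map_congr (hTcoe y)]
      refine Measure.ext fun s hs => ?_
      rw [Measure.map_apply (hgmeas y) hs]
      have h1 : volume (g y ⁻¹' s) = volume (g y ⁻¹' s ∩ ⋃ i, A i) :=
        (measure_inter_conull hBnull).symm
      have h2 : ∀ i, g y ⁻¹' s ∩ A i = if y i ∈ s then A i else ∅ := by
        intro i
        by_cases hm : y i ∈ s
        · rw [if_pos hm]
          ext ω
          refine ⟨fun h => h.2, fun hω => ⟨?_, hω⟩⟩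
          rw [Set.mem_preimage, hgA y i ω hω]
          exact hm
        · rw [if_neg hm]
          ext ω
          simp only [mem_inter_iff, mem_preimage, mem_empty_iff_false, iff_false, not_and]
          intro hs' hω
          rw [hgA y i ω hω] at hs'
          exact hm hs'
      have hdisj2 : Pairwise (Function.onFun Disjoint fun i => g y ⁻¹' s ∩ A i) :=
        fun i k hik =>
          Disjoint.mono Set.inter_subset_right Set.inter_subset_right (hAdisj hik)
      rw [h1, Set.inter_iUnion,
        measure_iUnion hdisj2 (fun i => (hgmeas y hs).inter (hAmeas i)), tsum_fintype]
      rw [empMeas, Measure.smul_apply, Measure.finset_sum_apply, smul_eq_mul, Finset.mul_sum]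
      refine Finset.sum_congr rfl fun i _ => ?_
      rw [h2 i]
      by_cases hm : y i ∈ s
      · rw [if_pos hm, hvolA i, Measure.dirac_apply_of_mem hm, mul_one]
      · rw [if_neg hm, Measure.dirac_apply' _ hs, Set.indicator_of_notMem hm,
          mul_zero, measure_empty]
    have hFeq : (fun y : Fin N → E => u (empMeas y)) =
        (fun Y : Lp E 2 (volume : Measure Ω) =>
          u (Measure.map (Y : Ω → E) volume)) ∘ ⇑T := by
      funext y
      simp only [Function.comp]
      rw [hTlaw y]
    have hDF : ∀ x : Fin N → E,
        ∃ D' : Lp E 2 (volume : Measure Ω) →L[ℝ] ℝ,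
          HasFDerivAt (fun y : Fin N → E => u (empMeas y)) (D'.comp T) x ∧
          ∀ Y, D' Y = ∫ ω, ⟪Du (empMeas x) ((T x : Lp E 2 (volume : Measure Ω)) ω), Y ω⟫
            ∂volume := by
      intro x
      obtain ⟨D', hD', hval⟩ := hL (T x)
      refine ⟨D', ?_, ?_⟩
      · rw [hFeq]
        exact hD'.comp x (T.hasFDerivAt)
      · intro Y
        rw [hval Y, hTlaw x]
    constructor
    · intro x
      obtain ⟨D', hD', -⟩ := hDF x
      exact hD'.differentiableAt
    · intro x j v
      obtain ⟨D', hD', hval⟩ := hDF x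
      rw [hD'.fderiv, ContinuousLinearMap.comp_apply, hval (T (Pi.single j v))]
      have hgsing : ∀ ω, g (Pi.single j v) ω = (A j).indicator (fun _ => v) ω := by
        intro ω
        show ∑ k : Fin N, (A k).indicator (fun _ => Pi.single j v k) ω
          = (A j).indicator (fun _ => v) ω
        rw [Finset.sum_eq_single j]
        · simp
        · intro k _ hk
          simp [Pi.single_eq_of_ne hk]
        · exact fun h => absurd (Finset.mem_univ j) h
      have hae : (fun ω => ⟪Du (empMeas x) ((T x : Lp E 2 (volume : Measure Ω)) ω),
            (T (Pi.single j v) : Lp E 2 (volume : Measure Ω)) ω⟫) =ᵐ[volume]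
          (A j).indicator (fun _ => ⟪Du (empMeas x) (x j), v⟫) := by
        filter_upwards [hTcoe x, hTcoe (Pi.single j v)] with ω h1 h2
        rw [h1, h2, hgsing ω]
        by_cases hω : ω ∈ A j
        · rw [Set.indicator_of_mem hω, Set.indicator_of_mem hω, hgA x j ω hω]
        · rw [Set.indicator_of_notMem hω, Set.indicator_of_notMem hω, inner_zero_right]
      rw [integral_congr_ae hae, integral_indicator_const _ (hAmeas j), measureReal_def, hvolA j]
      rw [real_inner_smul_left]
      rw [ENNReal.toReal_inv, ENNReal.toReal_natCast, smul_eq_mul, one_div]
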